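/- Let n ≥ 5 and fix a pair of indices i ≠ j in {1,…,n}. Suppose the parameter collection c satisfies: (C1) c_i^{kj} c_j^{li} ≠ c_j^{ki} c_i^{lj} for all k ≠ l with k,l ∉ {i,j}; and (C2) for every p ∉ {i,j} there exist k < l < m with k,l,m ∉ {i,j} such that for each I ∈ {i,j}, c_p^{kI}(c_i^{lj}c_j^{mi} − c_j^{li}c_i^{mj}) + c_p^{lI}(c_j^{ki}c_i^{mj} − c_i^{kj}c_j^{mi}) + c_p^{mI}(c_i^{kj}c_j^{li} − c_j^{ki}c_i^{lj}) ≠ 0. Then there exists a vector a = (a_1,…,a_n) ∈ ℝ^n with a_i = a_j = 0, with ∏_{k∉{i,j}} a_k ≠ 0, satisfying Σ_{k∉{i,j}} c_i^{kj} a_k = 0 and Σ_{k∉{i,j}} c_j^{ki} a_k = 0, and such that for every p ∉ {i,j} at least one of Σ_{k∉{i,j}} c_p^{ki} a_k ≠ 0 or Σ_{k∉{i,j}} c_p^{kj} a_k ≠ 0 holds. -/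
import Mathlib


/-- A parameter collection: `c i k j` denotes `c_i^{kj}`, symmetric in the two
superscripts, with normalizations `c_i^{ii} = 1` and `c_i^{jj} = 0` for `i ≠ j`. -/
def IsParamColl (n : ℕ) (c : Fin n → Fin n → Fin n → ℝ) : Prop :=
  (∀ i j k : Fin n, j ≠ k → c i k j = c i j k) ∧
  (∀ i : Fin n, c i i i = 1) ∧
  (∀ i j : Fin n, i ≠ j → c i j j = 0)

/-- The linear functional `a ↦ ∑ t ∈ S, d t * a t`. -/
def lfun (n : ℕ) (S : Finset (Fin n)) (d : Fin n → ℝ) : (Fin n → ℝ) →ₗ[ℝ] ℝ where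
  toFun a := ∑ t ∈ S, d t * a t
  map_add' a b := by simp [mul_add, Finset.sum_add_distrib]
  map_smul' r a := by
    simp only [Pi.smul_apply, smul_eq_mul, RingHom.id_apply, Finset.mul_sum]
    exact Finset.sum_congr rfl fun t _ => by ring

lemma lfun_apply (n : ℕ) (S : Finset (Fin n)) (d a : Fin n → ℝ) :
    lfun n S d a = ∑ t ∈ S, d t * a t := rfl

/-- 2×2 determinant `D a b`. -/
def Dd {n : ℕ} (c : Fin n → Fin n → Fin n → ℝ) (i j a b : Fin n) : ℝ :=
  c i a j * c j b i - c j a i * c i b j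

lemma sum_triple {n : ℕ} (S : Finset (Fin n)) {k l m : Fin n}
    (hk : k ∈ S) (hl : l ∈ S) (hm : m ∈ S)
    (hkl : k ≠ l) (hkm : k ≠ m) (hlm : l ≠ m)
    (f w : Fin n → ℝ) (hw : ∀ t, t ≠ k → t ≠ l → t ≠ m → w t = 0) :
    ∑ t ∈ S, f t * w t = f k * w k + f l * w l + f m * w m := by
  have hsub : ({k, l, m} : Finset (Fin n)) ⊆ S := by
    intro t ht
    simp only [Finset.mem_insert, Finset.mem_singleton] at ht
    rcases ht with rfl | rfl | rfl <;> assumption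
  rw [← Finset.sum_subset hsub (by
    intro t _ ht
    simp only [Finset.mem_insert, Finset.mem_singleton, not_or] at ht
    rw [hw t ht.1 ht.2.1 ht.2.2, mul_zero])]
  rw [Finset.sum_insert (by simp [hkl, hkm]), Finset.sum_insert (by simp [hlm]),
    Finset.sum_singleton, add_assoc]

theorem stmt3 (n : ℕ) (hn : 5 ≤ n) (c : Fin n → Fin n → Fin n → ℝ)
    (hc : IsParamColl n c) (i j : Fin n) (hij : i ≠ j)
    (hC1 : ∀ k l : Fin n, k ≠ l → k ≠ i → k ≠ j → l ≠ i → l ≠ j →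
      c i k j * c j l i ≠ c j k i * c i l j)
    (hC2 : ∀ p : Fin n, p ≠ i → p ≠ j →
      ∃ k l m : Fin n, k < l ∧ l < m ∧
        k ≠ i ∧ k ≠ j ∧ l ≠ i ∧ l ≠ j ∧ m ≠ i ∧ m ≠ j ∧
        ∀ I : Fin n, (I = i ∨ I = j) →
          c p k I * (c i l j * c j m i - c j l i * c i m j)
            + c p l I * (c j k i * c i m j - c i k j * c j m i)
            + c p m I * (c i k j * c j l i - c j k i * c i l j) ≠ 0) :
    ∃ a : Fin n → ℝ,
      a i = 0 ∧ a j = 0 ∧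
      (∏ k ∈ Finset.univ.filter (fun k => k ≠ i ∧ k ≠ j), a k) ≠ 0 ∧
      (∑ k ∈ Finset.univ.filter (fun k => k ≠ i ∧ k ≠ j), c i k j * a k = 0) ∧
      (∑ k ∈ Finset.univ.filter (fun k => k ≠ i ∧ k ≠ j), c j k i * a k = 0) ∧
      ∀ p : Fin n, p ≠ i → p ≠ j →
        (∑ k ∈ Finset.univ.filter (fun k => k ≠ i ∧ k ≠ j), c p k i * a k ≠ 0) ∨
        (∑ k ∈ Finset.univ.filter (fun k => k ≠ i ∧ k ≠ j), c p k j * a k ≠ 0) := by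
  classical
  set S : Finset (Fin n) := Finset.univ.filter (fun k => k ≠ i ∧ k ≠ j) with hS
  have hmem : ∀ k, k ∈ S ↔ (k ≠ i ∧ k ≠ j) := by intro k; simp [hS]
  set W : Submodule ℝ (Fin n → ℝ) :=
    LinearMap.ker (LinearMap.proj (R := ℝ) (φ := fun _ : Fin n => ℝ) i) ⊓
      LinearMap.ker (LinearMap.proj (R := ℝ) (φ := fun _ : Fin n => ℝ) j) ⊓
      LinearMap.ker (lfun n S (fun t => c i t j)) ⊓
      LinearMap.ker (lfun n S (fun t => c j t i)) with hW
  -- the triple-support witness vectors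
  have key : ∀ k l m : Fin n, k ≠ i → k ≠ j → l ≠ i → l ≠ j → m ≠ i → m ≠ j →
      k ≠ l → k ≠ m → l ≠ m →
      ∃ w : Fin n → ℝ, w ∈ W ∧ w k = Dd c i j l m ∧
        ∀ d : Fin n → ℝ, lfun n S d w
          = d k * Dd c i j l m + d l * Dd c i j m k + d m * Dd c i j k l := by
    intro k l m hki hkj hli hlj hmi hmj hkl hkm hlm
    set w : Fin n → ℝ := fun t =>
      if t = k then Dd c i j l m else if t = l then Dd c i j m k
        else if t = m then Dd c i j k l else 0 with hwdef
    have hwk : w k = Dd c i j l m := by simp [hwdef]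
    have hwl : w l = Dd c i j m k := by simp [hwdef, Ne.symm hkl]
    have hwm : w m = Dd c i j k l := by simp [hwdef, Ne.symm hkm, Ne.symm hlm]
    have hw0 : ∀ t, t ≠ k → t ≠ l → t ≠ m → w t = 0 := by
      intro t h1 h2 h3; simp [hwdef, h1, h2, h3]
    have hval : ∀ d : Fin n → ℝ, lfun n S d w
        = d k * Dd c i j l m + d l * Dd c i j m k + d m * Dd c i j k l := by
      intro d
      rw [lfun_apply,
        sum_triple S ((hmem k).2 ⟨hki, hkj⟩) ((hmem l).2 ⟨hli, hlj⟩)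
          ((hmem m).2 ⟨hmi, hmj⟩) hkl hkm hlm d w hw0, hwk, hwl, hwm]
    refine ⟨w, ?_, hwk, hval⟩
    rw [hW]
    simp only [Submodule.mem_inf, LinearMap.mem_ker, LinearMap.proj_apply]
    refine ⟨⟨⟨?_, ?_⟩, ?_⟩, ?_⟩
    · exact hw0 i (Ne.symm hki) (Ne.symm hli) (Ne.symm hmi)
    · exact hw0 j (Ne.symm hkj) (Ne.symm hlj) (Ne.symm hmj)
    · rw [hval]; simp only [Dd]; ring
    · rw [hval]; simp only [Dd]; ring
  have hScard : 3 ≤ S.card := by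
    have h1 : S = Finset.univ \ {i, j} := by
      ext t
      simp only [hmem, Finset.mem_sdiff, Finset.mem_univ, true_and, Finset.mem_insert,
        Finset.mem_singleton, not_or]
    rw [h1, Finset.card_sdiff_of_subset (Finset.subset_univ _), Finset.card_univ, Fintype.card_fin,
      Finset.card_pair hij]
    omega
  -- the finite family of proper subspaces of W to avoid
  set P : (↥S × Bool) → Subspace ℝ ↥W := fun x =>
    LinearMap.ker ((cond x.2 (lfun n S (fun t => c x.1 t i))
      (LinearMap.proj (R := ℝ) (φ := fun _ : Fin n => ℝ) (x.1 : Fin n))).comp W.subtype)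
    with hP
  have hne : ∀ x, P x ≠ ⊤ := by
    rintro ⟨⟨k, hkS⟩, b⟩ htop
    rw [hP] at htop
    have hzero := LinearMap.ker_eq_top.mp htop
    obtain ⟨hki, hkj⟩ := (hmem k).1 hkS
    cases b with
    | false =>
      have h2 : 1 < (S.erase k).card := by
        rw [Finset.card_erase_of_mem hkS]; omega
      obtain ⟨l, hl, m, hm, hlm⟩ := Finset.one_lt_card.mp h2
      obtain ⟨hlk, hlS⟩ := Finset.mem_erase.mp hl
      obtain ⟨hmk, hmS⟩ := Finset.mem_erase.mp hm
      obtain ⟨hli, hlj⟩ := (hmem l).1 hlS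
      obtain ⟨hmi, hmj⟩ := (hmem m).1 hmS
      obtain ⟨w, hwW, hwk, -⟩ := key k l m hki hkj hli hlj hmi hmj
        (Ne.symm hlk) (Ne.symm hmk) hlm
      have h0 : w k = 0 := by
        have := congrFun (congrArg DFunLike.coe hzero) ⟨w, hwW⟩
        simpa using this
      rw [hwk] at h0
      exact sub_ne_zero.mpr (hC1 l m hlm hli hlj hmi hmj) h0
    | true =>
      obtain ⟨k', l', m', hkl', hlm', hk'i, hk'j, hl'i, hl'j, hm'i, hm'j, hval⟩ :=
        hC2 k hki hkj
      obtain ⟨w, hwW, -, hfun⟩ := key k' l' m' hk'i hk'j hl'i hl'j hm'i hm'j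
        (ne_of_lt hkl') (ne_of_lt (hkl'.trans hlm')) (ne_of_lt hlm')
      have h0 : lfun n S (fun t => c k t i) w = 0 := by
        have := congrFun (congrArg DFunLike.coe hzero) ⟨w, hwW⟩
        simpa using this
      rw [hfun] at h0
      apply hval i (Or.inl rfl)
      simp only [Dd] at h0
      linear_combination h0
  have hcov : (⋃ x, (P x : Set ↥W)) ≠ Set.univ := by
    intro h
    obtain ⟨x, hx⟩ := Subspace.exists_eq_top_of_iUnion_eq_univ h
    exact hne x hx
  obtain ⟨wW, hwW⟩ := (Set.ne_univ_iff_exists_notMem _).mp hcov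
  simp only [Set.mem_iUnion, not_exists] at hwW
  set a : Fin n → ℝ := (wW : Fin n → ℝ) with ha
  have haW : (wW : Fin n → ℝ) ∈
      (LinearMap.ker (LinearMap.proj (R := ℝ) (φ := fun _ : Fin n => ℝ) i) ⊓
        LinearMap.ker (LinearMap.proj (R := ℝ) (φ := fun _ : Fin n => ℝ) j) ⊓
        LinearMap.ker (lfun n S (fun t => c i t j)) ⊓
        LinearMap.ker (lfun n S (fun t => c j t i))) := wW.2
  simp only [Submodule.mem_inf, LinearMap.mem_ker, LinearMap.proj_apply] at haW
  obtain ⟨⟨⟨hai, haj⟩, hs1⟩, hs2⟩ := haW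
  refine ⟨a, hai, haj, ?_, ?_, ?_, ?_⟩
  · rw [Finset.prod_ne_zero_iff]
    intro k hk h0
    apply hwW (⟨k, hk⟩, false)
    simp only [SetLike.mem_coe, LinearMap.mem_ker, LinearMap.comp_apply, Bool.cond_false,
      Submodule.subtype_apply, LinearMap.proj_apply]
    exact h0
  · exact hs1
  · exact hs2
  · intro p hpi hpj
    left
    intro h0
    apply hwW (⟨p, (hmem p).2 ⟨hpi, hpj⟩⟩, true)
    simp only [hP, SetLike.mem_coe, LinearMap.mem_ker, LinearMap.comp_apply, Bool.cond_true,
      Submodule.subtype_apply]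
    rw [lfun_apply]
    exact h0
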